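/- arXiv:2310.17137 — 3 statements merged into one kernel-verified Lean document; each statement's English description precedes it below -/
import Mathlib

section
/- Under the alternating projection update with block I — i.e., W⁽ʲ⁺¹⁾ = W⁽ʲ⁾ + E_Iᵀ K_{I,I}⁻¹ E_I R⁽ʲ⁾ where R⁽ʲ⁾ = B − KW⁽ʲ⁾ — the quadratic objective h(W) = (1/2) tr(Wᵀ K W) − tr(Bᵀ W) decreases by exactly h(W⁽ʲ⁺¹⁾) − h(W⁽ʲ⁾) = −(1/2) tr(R⁽ʲ⁾_{I,:}ᵀ K_{I,I}⁻¹ R⁽ʲ⁾_{I,:}). -/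
open Matrix

/-- The row-selection matrix `E_I`: rows of the identity indexed by `I`. -/
def rowSel {n : ℕ} (I : Finset (Fin n)) : Matrix I (Fin n) ℝ :=
  Matrix.of fun i j => if (i : Fin n) = j then 1 else 0

/-- The quadratic objective `h(W) = (1/2) tr(Wᵀ K W) − tr(Bᵀ W)`. -/
noncomputable def quadObj {n l : ℕ} (K : Matrix (Fin n) (Fin n) ℝ)
    (B W : Matrix (Fin n) (Fin l) ℝ) : ℝ :=
  (1 / 2) * (Wᵀ * K * W).trace - (Bᵀ * W).trace

lemma rowSel_transpose_mulVec {n : ℕ} (I : Finset (Fin n)) (x : I → ℝ) (i₀ : I) :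
    ((rowSel I)ᵀ *ᵥ x) (i₀ : Fin n) = x i₀ := by
  simp only [mulVec, dotProduct, transpose_apply, rowSel, Matrix.of_apply]
  rw [Finset.sum_eq_single i₀]
  · simp
  · intro b _ hb
    rw [if_neg (fun h => hb (Subtype.coe_injective h)), zero_mul]
  · simp

lemma rowSel_sandwich_posDef {n : ℕ} (K : Matrix (Fin n) (Fin n) ℝ)
    (hK : K.PosDef) (I : Finset (Fin n)) :
    (rowSel I * K * (rowSel I)ᵀ).PosDef := by
  refine posDef_iff_dotProduct_mulVec.mpr ⟨?_, ?_⟩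
  · have h1 : Kᵀ = K := hK.1
    show (rowSel I * K * (rowSel I)ᵀ)ᴴ = _
    rw [conjTranspose_eq_transpose_of_trivial]
    rw [transpose_mul, transpose_mul, transpose_transpose, h1, Matrix.mul_assoc]
  · intro x hx
    have hy : (rowSel I)ᵀ *ᵥ x ≠ 0 := by
      intro h
      apply hx
      funext i₀
      have := congrFun h (i₀ : Fin n)
      rw [rowSel_transpose_mulVec] at this
      simpa using this
    have hpos := hK.dotProduct_mulVec_pos hy
    simp only [star_trivial] at hpos ⊢
    calc x ⬝ᵥ ((rowSel I * K * (rowSel I)ᵀ) *ᵥ x)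
        = x ⬝ᵥ (rowSel I *ᵥ (K *ᵥ ((rowSel I)ᵀ *ᵥ x))) := by
          rw [← mulVec_mulVec, ← mulVec_mulVec]
      _ = ((rowSel I)ᵀ *ᵥ x) ⬝ᵥ (K *ᵥ ((rowSel I)ᵀ *ᵥ x)) := by
          rw [dotProduct_mulVec, mulVec_transpose]
      _ > 0 := hpos

/-- Abstract algebraic core of the objective-decrease computation. -/
lemma quad_decrease_aux {n l : ℕ} {m : Type*} [Fintype m] [DecidableEq m]
    (K : Matrix (Fin n) (Fin n) ℝ) (hKT : Kᵀ = K)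
    (B W R : Matrix (Fin n) (Fin l) ℝ) (hR : R = B - K * W)
    (E : Matrix m (Fin n) ℝ) (M : Matrix m m ℝ) (hM : M = E * K * Eᵀ)
    (N : Matrix m m ℝ) (hNT : Nᵀ = N) (hNMN : N * M * N = N)
    (S : Matrix m (Fin l) ℝ) (hS : S = E * R) :
    quadObj K B (W + Eᵀ * N * S) - quadObj K B W
      = -((1 / 2) * (Sᵀ * N * S).trace) := by
  obtain ⟨D, hD⟩ : ∃ D : Matrix (Fin n) (Fin l) ℝ, D = Eᵀ * N * S := ⟨_, rfl⟩
  rw [← hD]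
  have hDT : Dᵀ = Sᵀ * N * E := by
    rw [hD, transpose_mul, transpose_mul, transpose_transpose, hNT, Matrix.mul_assoc]
  have hDKD : Dᵀ * K * D = Sᵀ * N * S := by
    rw [hDT, hD]
    calc Sᵀ * N * E * K * (Eᵀ * N * S)
        = Sᵀ * ((N * (E * K * Eᵀ) * N) * S) := by
          simp only [Matrix.mul_assoc]
      _ = Sᵀ * N * S := by rw [← hM, hNMN, Matrix.mul_assoc]
  have hDR : Dᵀ * R = Sᵀ * N * S := by
    rw [hDT, Matrix.mul_assoc, Matrix.mul_assoc, ← hS, ← Matrix.mul_assoc]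
  have htr1 : (Wᵀ * K * D).trace = (Dᵀ * K * W).trace := by
    rw [← trace_transpose (Wᵀ * K * D), transpose_mul, transpose_mul,
      transpose_transpose, hKT, Matrix.mul_assoc]
  have htr2 : (Bᵀ * D).trace = (Dᵀ * B).trace := by
    rw [← trace_transpose (Bᵀ * D), transpose_mul, transpose_transpose]
  have hexp : (W + D)ᵀ * K * (W + D)
      = Wᵀ * K * W + Wᵀ * K * D + (Dᵀ * K * W + Dᵀ * K * D) := by
    rw [transpose_add, Matrix.add_mul, Matrix.add_mul, Matrix.mul_add, Matrix.mul_add]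
  have hBexp : Bᵀ * (W + D) = Bᵀ * W + Bᵀ * D := by rw [Matrix.mul_add]
  have hcross : (Dᵀ * K * W).trace - (Dᵀ * B).trace = -(Sᵀ * N * S).trace := by
    have h1 : Dᵀ * K * W - Dᵀ * B = -(Dᵀ * R) := by
      rw [hR, Matrix.mul_sub, ← Matrix.mul_assoc]
      abel
    calc (Dᵀ * K * W).trace - (Dᵀ * B).trace
        = (Dᵀ * K * W - Dᵀ * B).trace := by rw [trace_sub]
      _ = (-(Dᵀ * R)).trace := by rw [h1]
      _ = -(Sᵀ * N * S).trace := by rw [trace_neg, hDR]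
  rw [quadObj, quadObj, hexp, hBexp]
  simp only [trace_add]
  rw [htr1, hDKD]
  linarith [hcross, htr2]

/-- One alternating projection update with block `I` decreases the quadratic
objective by exactly `(1/2) tr(R_{I,:}ᵀ K_{I,I}⁻¹ R_{I,:})`. -/
theorem altproj_objective_decrease {n l : ℕ} (K : Matrix (Fin n) (Fin n) ℝ)
    (hK : K.PosDef) (B : Matrix (Fin n) (Fin l) ℝ)
    (I : Finset (Fin n)) (W W' R : Matrix (Fin n) (Fin l) ℝ)
    (hR : R = B - K * W)
    (hW' : W' = W + (rowSel I)ᵀ * (rowSel I * K * (rowSel I)ᵀ)⁻¹ * (rowSel I * R)) :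
    quadObj K B W' - quadObj K B W
      = -((1 / 2) * ((rowSel I * R)ᵀ * (rowSel I * K * (rowSel I)ᵀ)⁻¹ *
          (rowSel I * R)).trace) := by
  have hMpd := rowSel_sandwich_posDef K hK I
  have hMdet : IsUnit (rowSel I * K * (rowSel I)ᵀ).det := hMpd.det_pos.ne'.isUnit
  have hKT : Kᵀ = K := hK.1
  have hMT : (rowSel I * K * (rowSel I)ᵀ)ᵀ = rowSel I * K * (rowSel I)ᵀ := by
    rw [transpose_mul, transpose_mul, transpose_transpose, hKT, Matrix.mul_assoc]
  have hNT : ((rowSel I * K * (rowSel I)ᵀ)⁻¹)ᵀ = (rowSel I * K * (rowSel I)ᵀ)⁻¹ := by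
    rw [transpose_nonsing_inv, hMT]
  have hNMN : (rowSel I * K * (rowSel I)ᵀ)⁻¹ * (rowSel I * K * (rowSel I)ᵀ) *
      (rowSel I * K * (rowSel I)ᵀ)⁻¹ = (rowSel I * K * (rowSel I)ᵀ)⁻¹ := by
    rw [Matrix.nonsing_inv_mul _ hMdet, Matrix.one_mul]
  rw [hW']
  exact quad_decrease_aux K hK.1 B W R hR (rowSel I) _ rfl _ hNT hNMN _ rfl
end

section
/- Let K be symmetric positive definite with smallest eigenvalue λ_min, let P be a partition of {1,…,n} into m blocks, and let λ'_max = max_{I ∈ P} λ_max(K_{I,I}). If the alternating projection iteration selects at each step the block I maximizing ‖R⁽ʲ⁾_{I,:}‖_F² (Gauss–Southwell rule), then h(W⁽ʲ⁺¹⁾) − h(W*) ≤ (1 − λ_min/(m λ'_max)) (h(W⁽ʲ⁾) − h(W*)), where h(W) = (1/2) tr(Wᵀ K W) − tr(Bᵀ W) and W* = K⁻¹B. -/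
set_option linter.unusedSectionVars false
set_option maxHeartbeats 1000000

open Matrix

section helpers
variable {k l : Type*} [Fintype k] [Fintype l] [DecidableEq k]

lemma traceA (d : k → ℝ) (S : Matrix k l ℝ) :
    (Sᵀ * Matrix.diagonal d * S).trace = ∑ i, d i * ∑ j, (S i j)^2 := by
  rw [Matrix.trace]
  simp only [Matrix.diag_apply, Matrix.mul_apply, Matrix.transpose_apply,
    Matrix.diagonal_apply, mul_ite, mul_zero, ite_mul, zero_mul,
    Finset.sum_ite_eq, Finset.sum_ite_eq', Finset.mem_univ, if_true]
  rw [Finset.sum_comm]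
  refine Finset.sum_congr rfl fun a _ => ?_
  rw [Finset.mul_sum]
  exact Finset.sum_congr rfl fun j _ => by ring

lemma traceB (S : Matrix k l ℝ) :
    (Sᵀ * S).trace = ∑ i, ∑ j, (S i j)^2 := by
  rw [Matrix.trace]
  simp only [Matrix.diag_apply, Matrix.mul_apply, Matrix.transpose_apply]
  rw [Finset.sum_comm]
  exact Finset.sum_congr rfl fun a _ => Finset.sum_congr rfl fun j _ => by ring

lemma trace_conj_ge (U : Matrix k k ℝ) (hU : U * Uᵀ = 1) (d : k → ℝ) (c : ℝ)
    (hd : ∀ i, c ≤ d i) (S : Matrix k l ℝ) :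
    c * (Sᵀ * S).trace ≤ (Sᵀ * (U * Matrix.diagonal d * Uᵀ) * S).trace := by
  have h1 : Sᵀ * (U * Matrix.diagonal d * Uᵀ) * S = (Uᵀ*S)ᵀ * Matrix.diagonal d * (Uᵀ*S) := by
    rw [Matrix.transpose_mul, Matrix.transpose_transpose]
    simp only [Matrix.mul_assoc]
  have h2 : Sᵀ * S = (Uᵀ*S)ᵀ * (Uᵀ*S) := by
    rw [Matrix.transpose_mul, Matrix.transpose_transpose, Matrix.mul_assoc,
      ← Matrix.mul_assoc U, hU, Matrix.one_mul]
  rw [h1, h2, traceA, traceB, Finset.mul_sum]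
  refine Finset.sum_le_sum fun i _ => ?_
  exact mul_le_mul_of_nonneg_right (hd i) (Finset.sum_nonneg fun j _ => sq_nonneg _)

lemma trace_conj_le (U : Matrix k k ℝ) (hU : U * Uᵀ = 1) (d : k → ℝ) (c : ℝ)
    (hd : ∀ i, d i ≤ c) (S : Matrix k l ℝ) :
    (Sᵀ * (U * Matrix.diagonal d * Uᵀ) * S).trace ≤ c * (Sᵀ * S).trace := by
  have h1 : Sᵀ * (U * Matrix.diagonal d * Uᵀ) * S = (Uᵀ*S)ᵀ * Matrix.diagonal d * (Uᵀ*S) := by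
    rw [Matrix.transpose_mul, Matrix.transpose_transpose]
    simp only [Matrix.mul_assoc]
  have h2 : Sᵀ * S = (Uᵀ*S)ᵀ * (Uᵀ*S) := by
    rw [Matrix.transpose_mul, Matrix.transpose_transpose, Matrix.mul_assoc,
      ← Matrix.mul_assoc U, hU, Matrix.one_mul]
  rw [h1, h2, traceA, traceB, Finset.mul_sum]
  refine Finset.sum_le_sum fun i _ => ?_
  exact mul_le_mul_of_nonneg_right (hd i) (Finset.sum_nonneg fun j _ => sq_nonneg _)

lemma spectral_real {M : Matrix k k ℝ} (hM : M.IsHermitian) :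
    M = (Matrix.IsHermitian.eigenvectorUnitary hM : Matrix k k ℝ) *
      Matrix.diagonal hM.eigenvalues *
      (Matrix.IsHermitian.eigenvectorUnitary hM : Matrix k k ℝ)ᵀ := by
  have h := hM.spectral_theorem
  simpa [Matrix.star_eq_conjTranspose, Matrix.conjTranspose_eq_transpose_of_trivial,
    Function.comp] using h

lemma unit_right {M : Matrix k k ℝ} (hM : M.IsHermitian) :
    (Matrix.IsHermitian.eigenvectorUnitary hM : Matrix k k ℝ) *
      (Matrix.IsHermitian.eigenvectorUnitary hM : Matrix k k ℝ)ᵀ = 1 := by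
  have h := (Matrix.mem_unitaryGroup_iff).mp (Matrix.IsHermitian.eigenvectorUnitary hM).2
  rwa [Matrix.star_eq_conjTranspose, Matrix.conjTranspose_eq_transpose_of_trivial] at h

lemma unit_left {M : Matrix k k ℝ} (hM : M.IsHermitian) :
    (Matrix.IsHermitian.eigenvectorUnitary hM : Matrix k k ℝ)ᵀ *
      (Matrix.IsHermitian.eigenvectorUnitary hM : Matrix k k ℝ) = 1 := by
  have h := (Matrix.mem_unitaryGroup_iff').mp (Matrix.IsHermitian.eigenvectorUnitary hM).2
  rwa [Matrix.star_eq_conjTranspose, Matrix.conjTranspose_eq_transpose_of_trivial] at h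

lemma inv_decomp {M : Matrix k k ℝ} (hPD : M.PosDef) :
    M⁻¹ = (Matrix.IsHermitian.eigenvectorUnitary hPD.1 : Matrix k k ℝ) *
      Matrix.diagonal (fun i => (hPD.1.eigenvalues i)⁻¹) *
      (Matrix.IsHermitian.eigenvectorUnitary hPD.1 : Matrix k k ℝ)ᵀ := by
  set U := (Matrix.IsHermitian.eigenvectorUnitary hPD.1 : Matrix k k ℝ)
  apply Matrix.inv_eq_left_inv
  calc (U * Matrix.diagonal (fun i => (hPD.1.eigenvalues i)⁻¹) * Uᵀ) * M
      = U * Matrix.diagonal (fun i => (hPD.1.eigenvalues i)⁻¹) * Uᵀ *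
        (U * Matrix.diagonal hPD.1.eigenvalues * Uᵀ) := by rw [← spectral_real hPD.1]
    _ = U * (Matrix.diagonal (fun i => (hPD.1.eigenvalues i)⁻¹) * ((Uᵀ * U) *
        (Matrix.diagonal hPD.1.eigenvalues))) * Uᵀ := by simp only [Matrix.mul_assoc]
    _ = 1 := by
        rw [unit_left hPD.1, Matrix.one_mul, Matrix.diagonal_mul_diagonal]
        have : (fun i => (hPD.1.eigenvalues i)⁻¹ * hPD.1.eigenvalues i) = fun _ => (1:ℝ) := by
          funext i; exact inv_mul_cancel₀ (hPD.eigenvalues_pos i).ne'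
        rw [this, Matrix.diagonal_one, Matrix.mul_one, unit_right hPD.1]

lemma trace_inv_ge {M : Matrix k k ℝ} (hPD : M.PosDef) (c : ℝ) (hc : 0 < c)
    (hev : ∀ i, hPD.1.eigenvalues i ≤ c) (S : Matrix k l ℝ) :
    c⁻¹ * (Sᵀ * S).trace ≤ (Sᵀ * M⁻¹ * S).trace := by
  rw [inv_decomp hPD]
  exact trace_conj_ge _ (unit_right hPD.1) _ _
    (fun i => (inv_anti₀ (hPD.eigenvalues_pos i) (hev i))) S

lemma trace_inv_le {M : Matrix k k ℝ} (hPD : M.PosDef) (c : ℝ) (hc : 0 < c)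
    (hev : ∀ i, c ≤ hPD.1.eigenvalues i) (S : Matrix k l ℝ) :
    (Sᵀ * M⁻¹ * S).trace ≤ c⁻¹ * (Sᵀ * S).trace := by
  rw [inv_decomp hPD]
  exact trace_conj_le _ (unit_right hPD.1) _ _
    (fun i => (inv_anti₀ hc (hev i))) S

end helpers

section rowsel
variable {n : ℕ} {l' : Type*} [Fintype l']

lemma rowSel_mul_apply (I : Finset (Fin n)) (A : Matrix (Fin n) l' ℝ) (i : I) (j : l') :
    (rowSel I * A) i j = A (i : Fin n) j := by
  simp [rowSel, Matrix.mul_apply]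

lemma mul_rowSelT_apply (I : Finset (Fin n)) (A : Matrix l' (Fin n) ℝ) (i : l') (j : I) :
    (A * (rowSel I)ᵀ) i j = A i (j : Fin n) := by
  simp [rowSel, Matrix.mul_apply]

lemma rowSelT_mulVec (I : Finset (Fin n)) (x : I → ℝ) (i : I) :
    ((rowSel I)ᵀ *ᵥ x) (i : Fin n) = x i := by
  simp only [Matrix.mulVec, dotProduct, Matrix.transpose_apply, rowSel, Matrix.of_apply]
  rw [Finset.sum_eq_single i]
  · simp
  · intro b _ hb
    rw [if_neg (fun h => hb (Subtype.coe_injective h)), zero_mul]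
  · simp

end rowsel

/-- One alternating projection update with the Gauss–Southwell block selection
rule contracts the suboptimality of the quadratic objective by the factor
`1 − λ_min/(m λ'_max)`. -/
theorem altproj_gs_one_step_contraction {n l : ℕ}
    (K : Matrix (Fin n) (Fin n) ℝ) (hK : K.PosDef)
    (B : Matrix (Fin n) (Fin l) ℝ)
    (P : Finset (Finset (Fin n))) (m : ℕ) (hm : P.card = m)
    (hcover : ∀ i : Fin n, ∃ I ∈ P, i ∈ I)
    (hdisj : ∀ I ∈ P, ∀ J ∈ P, I ≠ J → Disjoint I J)
    (hblockne : ∀ I ∈ P, I.Nonempty)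
    (lammin : ℝ) (hmin : IsLeast (Set.range hK.1.eigenvalues) lammin)
    (hsub : ∀ I : Finset (Fin n), (rowSel I * K * (rowSel I)ᵀ).IsHermitian)
    (lam'max : ℝ)
    (hlam : IsGreatest {x : ℝ | ∃ I ∈ P, ∃ i : I, x = (hsub I).eigenvalues i} lam'max)
    (W W' R : Matrix (Fin n) (Fin l) ℝ) (hR : R = B - K * W)
    (Isel : Finset (Fin n)) (hIsel : Isel ∈ P)
    (hGS : ∀ J ∈ P, (∑ i ∈ J, ∑ j : Fin l, (R i j) ^ 2)
      ≤ ∑ i ∈ Isel, ∑ j : Fin l, (R i j) ^ 2)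
    (hW' : W' = W + (rowSel Isel)ᵀ * (rowSel Isel * K * (rowSel Isel)ᵀ)⁻¹ *
      (rowSel Isel * R)) :
    quadObj K B W' - quadObj K B (K⁻¹ * B)
      ≤ (1 - lammin / (m * lam'max)) * (quadObj K B W - quadObj K B (K⁻¹ * B)) := by
  classical
  set E : Matrix Isel (Fin n) ℝ := rowSel Isel with hE
  set M : Matrix Isel Isel ℝ := rowSel Isel * K * (rowSel Isel)ᵀ with hMdef
  -- basic facts about K
  have hKT : Kᵀ = K := by
    have h := hK.1
    rwa [Matrix.IsHermitian, Matrix.conjTranspose_eq_transpose_of_trivial] at h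
  have hKdet : IsUnit K.det := hK.det_pos.ne'.isUnit
  have hKinv : K⁻¹ * K = 1 := Matrix.nonsing_inv_mul K hKdet
  have hKinv' : K * K⁻¹ = 1 := Matrix.mul_nonsing_inv K hKdet
  have hKiT : (K⁻¹)ᵀ = K⁻¹ := by
    rw [Matrix.transpose_nonsing_inv, hKT]
  -- M is positive definite
  have hMPD : M.PosDef := by
    refine Matrix.PosDef.of_dotProduct_mulVec_pos (hsub Isel) fun x hx => ?_
    set y : Fin n → ℝ := (rowSel Isel)ᵀ *ᵥ x with hy
    have hy0 : y ≠ 0 := by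
      obtain ⟨i, hi⟩ := Function.ne_iff.mp hx
      intro h0
      apply hi
      have := rowSelT_mulVec Isel x i
      rw [← hy, h0] at this
      simpa using this.symm
    have hq := hK.dotProduct_mulVec_pos hy0
    have h1 : rowSel Isel *ᵥ (K *ᵥ y) = M *ᵥ x := by
      rw [hy, Matrix.mulVec_mulVec, Matrix.mulVec_mulVec]
    have h2 : x ⬝ᵥ (rowSel Isel *ᵥ (K *ᵥ y)) = y ⬝ᵥ (K *ᵥ y) := by
      rw [Matrix.dotProduct_mulVec, ← Matrix.mulVec_transpose, ← hy]
    have hform : star x ⬝ᵥ M *ᵥ x = star y ⬝ᵥ K *ᵥ y := by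
      simp only [star_trivial]
      rw [← h1, h2]
    rw [hform]; exact hq
  have hMdet : IsUnit M.det := (Matrix.isUnit_iff_isUnit_det M).mp hMPD.isUnit
  have hMinv : M⁻¹ * M = 1 := Matrix.nonsing_inv_mul M hMdet
  have hMinv' : M * M⁻¹ = 1 := Matrix.mul_nonsing_inv M hMdet
  have hMT : Mᵀ = M := by
    have h := hMPD.1
    rwa [Matrix.IsHermitian, Matrix.conjTranspose_eq_transpose_of_trivial] at h
  have hMiT : (M⁻¹)ᵀ = M⁻¹ := by
    rw [Matrix.transpose_nonsing_inv, hMT]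
  -- positivity of constants
  have hlammin_pos : 0 < lammin := by
    obtain ⟨i, hi⟩ := hmin.1
    rw [← hi]; exact hK.eigenvalues_pos i
  have hlam'max_pos : 0 < lam'max := by
    obtain ⟨i0, hi0⟩ := hblockne Isel hIsel
    have hmem : (hsub Isel).eigenvalues ⟨i0, hi0⟩ ∈
        {x : ℝ | ∃ I ∈ P, ∃ i : I, x = (hsub I).eigenvalues i} := ⟨Isel, hIsel, ⟨i0, hi0⟩, rfl⟩
    exact lt_of_lt_of_le (hMPD.eigenvalues_pos ⟨i0, hi0⟩) (hlam.2 hmem)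
  have hmpos : 0 < (m : ℝ) := by
    have : P.Nonempty := ⟨Isel, hIsel⟩
    have := Finset.card_pos.mpr this
    rw [hm] at this
    exact_mod_cast this
  -- abbreviations
  set S : Matrix Isel (Fin l) ℝ := rowSel Isel * R with hS
  set D : Matrix (Fin n) (Fin l) ℝ := (rowSel Isel)ᵀ * M⁻¹ * S with hD
  set a : ℝ := (Rᵀ * K⁻¹ * R).trace with ha
  set b : ℝ := (Sᵀ * M⁻¹ * S).trace with hb
  set r : ℝ := (Rᵀ * R).trace with hr
  set s : ℝ := (Sᵀ * S).trace with hs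
  -- Identity 1: suboptimality at W
  have key1 : quadObj K B W - quadObj K B (K⁻¹ * B) = (1/2) * a := by
    have hRt : Rᵀ = Bᵀ - Wᵀ * K := by
      rw [hR, Matrix.transpose_sub, Matrix.transpose_mul, hKT]
    have hexp : Rᵀ * K⁻¹ * R = Bᵀ * K⁻¹ * B - Bᵀ * W - Wᵀ * B + Wᵀ * K * W := by
      rw [hRt, hR]
      rw [Matrix.sub_mul, Matrix.sub_mul, Matrix.mul_sub, Matrix.mul_sub]
      have e1 : Bᵀ * K⁻¹ * (K * W) = Bᵀ * W := by
        rw [Matrix.mul_assoc (Bᵀ), ← Matrix.mul_assoc K⁻¹, hKinv, Matrix.one_mul]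
      have e2 : Wᵀ * K * K⁻¹ * B = Wᵀ * B := by
        rw [Matrix.mul_assoc (Wᵀ), hKinv', Matrix.mul_one]
      have e3 : Wᵀ * K * K⁻¹ * (K * W) = Wᵀ * K * W := by
        rw [Matrix.mul_assoc (Wᵀ * K), ← Matrix.mul_assoc K⁻¹, hKinv, Matrix.one_mul]
      rw [e1, e2, e3]
      abel
    have hopt : (K⁻¹ * B)ᵀ * K * (K⁻¹ * B) = Bᵀ * K⁻¹ * B := by
      rw [Matrix.transpose_mul, hKiT, Matrix.mul_assoc (Bᵀ * K⁻¹), ← Matrix.mul_assoc K,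
        hKinv', Matrix.one_mul]
    have htrT : (Wᵀ * B).trace = (Bᵀ * W).trace := by
      rw [← Matrix.trace_transpose, Matrix.transpose_mul, Matrix.transpose_transpose]
    rw [ha, hexp]
    simp only [quadObj, hopt, Matrix.trace_sub, Matrix.trace_add, htrT]
    have : (Bᵀ * (K⁻¹ * B)).trace = (Bᵀ * K⁻¹ * B).trace := by rw [Matrix.mul_assoc]
    rw [this]
    ring
  -- Identity 2: decrease from W to W'
  have key2 : quadObj K B W' = quadObj K B W - (1/2) * b := by
    have hW'2 : W' = W + D := by rw [hW', hD, hS]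
    have hDt : Dᵀ = Sᵀ * M⁻¹ * E := by
      rw [hD, Matrix.transpose_mul ((rowSel Isel)ᵀ * M⁻¹) S,
        Matrix.transpose_mul (rowSel Isel)ᵀ M⁻¹, Matrix.transpose_transpose, hMiT,
        ← Matrix.mul_assoc, ← hE]
    have hDKD : Dᵀ * K * D = Sᵀ * M⁻¹ * S := by
      rw [hDt, hD]
      calc Sᵀ * M⁻¹ * E * K * ((rowSel Isel)ᵀ * M⁻¹ * S)
          = Sᵀ * M⁻¹ * (E * K * (rowSel Isel)ᵀ) * (M⁻¹ * S) := by
            simp only [Matrix.mul_assoc]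
        _ = Sᵀ * M⁻¹ * M * (M⁻¹ * S) := by rw [hE, ← hMdef]
        _ = Sᵀ * (M⁻¹ * M) * (M⁻¹ * S) := by simp only [Matrix.mul_assoc]
        _ = Sᵀ * M⁻¹ * S := by rw [hMinv, Matrix.mul_one, Matrix.mul_assoc]
    have hRD : Rᵀ * D = Sᵀ * M⁻¹ * S := by
      rw [hD]
      calc Rᵀ * ((rowSel Isel)ᵀ * M⁻¹ * S)
          = (Rᵀ * (rowSel Isel)ᵀ) * M⁻¹ * S := by simp only [Matrix.mul_assoc]
        _ = Sᵀ * M⁻¹ * S := by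
            rw [← Matrix.transpose_mul, ← hS]
    have hWKD : (Wᵀ * K * D).trace = (Bᵀ * D).trace - b := by
      have : Wᵀ * K * D = Bᵀ * D - Rᵀ * D := by
        rw [hR, Matrix.transpose_sub, Matrix.transpose_mul, hKT, Matrix.sub_mul]
        abel
      rw [this, Matrix.trace_sub, hRD, hb]
    have hDKW : (Dᵀ * K * W).trace = (Wᵀ * K * D).trace := by
      rw [← Matrix.trace_transpose, Matrix.transpose_mul, Matrix.transpose_mul,
        Matrix.transpose_transpose, hKT, Matrix.mul_assoc]
    have hexp : quadObj K B (W + D) = quadObj K B W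
        + (1/2) * ((Dᵀ * K * W).trace + (Wᵀ * K * D).trace + (Dᵀ * K * D).trace)
        - (Bᵀ * D).trace := by
      simp only [quadObj, Matrix.transpose_add, Matrix.add_mul, Matrix.mul_add,
        Matrix.trace_add]
      ring
    rw [hW'2, hexp, hDKW, hWKD, hDKD, ← hb, hb]
    ring
  -- Frobenius norm identities
  have hSapp : ∀ (i : Isel) (j : Fin l), S i j = R (i : Fin n) j := by
    intro i j; rw [hS]; exact rowSel_mul_apply Isel R i j
  have hs_eq : s = ∑ i ∈ Isel, ∑ j : Fin l, (R i j) ^ 2 := by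
    rw [hs, traceB]
    rw [← Finset.sum_coe_sort Isel (fun i => ∑ j : Fin l, (R i j)^2)]
    exact Finset.sum_congr rfl fun i _ => Finset.sum_congr rfl fun j _ => by rw [hSapp]
  have hr_eq : r = ∑ i : Fin n, ∑ j : Fin l, (R i j) ^ 2 := by rw [hr, traceB]
  have hr_le : r ≤ (m : ℝ) * s := by
    have hbiU : Finset.univ = P.biUnion id := by
      ext i
      simp only [Finset.mem_univ, true_iff, Finset.mem_biUnion, id]
      exact hcover i
    have hPdisj : ∀ x ∈ P, ∀ y ∈ P, x ≠ y → Disjoint (id x) (id y) := hdisj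
    have hsplit : r = ∑ J ∈ P, ∑ i ∈ J, ∑ j : Fin l, (R i j) ^ 2 := by
      rw [hr_eq, hbiU, Finset.sum_biUnion hPdisj]
      exact Finset.sum_congr rfl fun J _ => rfl
    rw [hsplit, hs_eq]
    calc ∑ J ∈ P, ∑ i ∈ J, ∑ j : Fin l, (R i j) ^ 2
        ≤ ∑ _J ∈ P, ∑ i ∈ Isel, ∑ j : Fin l, (R i j) ^ 2 :=
          Finset.sum_le_sum fun J hJ => hGS J hJ
      _ = (m : ℝ) * ∑ i ∈ Isel, ∑ j : Fin l, (R i j) ^ 2 := by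
          rw [Finset.sum_const, hm, nsmul_eq_mul]
  have hs_nonneg : 0 ≤ s := by
    rw [hs_eq]
    exact Finset.sum_nonneg fun i _ => Finset.sum_nonneg fun j _ => sq_nonneg _
  -- spectral bounds
  have ha_le : a ≤ lammin⁻¹ * r := by
    rw [ha, hr]
    exact trace_inv_le hK lammin hlammin_pos (fun i => hmin.2 (Set.mem_range_self i)) R
  have hb_ge : lam'max⁻¹ * s ≤ b := by
    rw [hb, hs]
    refine trace_inv_ge hMPD lam'max hlam'max_pos (fun i => ?_) S
    exact hlam.2 ⟨Isel, hIsel, i, rfl⟩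
  -- main chain: (lammin / (m * lam'max)) * a ≤ b
  have hchain : lammin / ((m : ℝ) * lam'max) * a ≤ b := by
    have hρ : 0 ≤ lammin / ((m : ℝ) * lam'max) :=
      div_nonneg hlammin_pos.le (mul_nonneg hmpos.le hlam'max_pos.le)
    calc lammin / ((m : ℝ) * lam'max) * a
        ≤ lammin / ((m : ℝ) * lam'max) * (lammin⁻¹ * r) :=
          mul_le_mul_of_nonneg_left ha_le hρ
      _ = r / ((m : ℝ) * lam'max) := by
          field_simp
      _ ≤ ((m : ℝ) * s) / ((m : ℝ) * lam'max) :=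
          (div_le_div_iff_of_pos_right (mul_pos hmpos hlam'max_pos)).mpr hr_le
      _ = lam'max⁻¹ * s := by
          rw [mul_div_mul_left _ _ hmpos.ne', div_eq_inv_mul]
      _ ≤ b := hb_ge
  -- conclude
  have hW'eq : quadObj K B W' - quadObj K B (K⁻¹ * B)
      = (quadObj K B W - quadObj K B (K⁻¹ * B)) - (1/2) * b := by
    rw [key2]; ring
  rw [hW'eq, key1]
  nlinarith [hchain]
end

section
/- With Gauss–Southwell block selection, after t epochs (each epoch consisting of m updates, where m = |P|), the iterates of alternating projection satisfy ‖W⁽ᵗ⁾ − W*‖_K² ≤ exp(−t/κ′) ‖W⁽⁰⁾ − W*‖_K², where κ′ = λ'_max/λ_min, λ'_max = max_{I ∈ P} λ_max(K_{I,I}), λ_min is the smallest eigenvalue of K, and ‖M‖_K² = tr(Mᵀ K M). -/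
open Matrix

section helpers
variable {ι : Type*} [Fintype ι] [DecidableEq ι]

lemma vecMul_eq_starMulVec (U : Matrix ι ι ℝ) (x : ι → ℝ) :
    x ᵥ* U = star U *ᵥ x := by
  ext j
  simp [vecMul, mulVec, dotProduct, Matrix.star_apply, mul_comm]

lemma unitary_diag_inv (U : Matrix ι ι ℝ) (hU1 : star U * U = 1) (hU2 : U * star U = 1)
    (d : ι → ℝ) (hd : ∀ i, d i ≠ 0) :
    (U * diagonal d * star U)⁻¹ = U * diagonal (fun i => (d i)⁻¹) * star U := by
  apply inv_eq_right_inv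
  calc (U * diagonal d * star U) * (U * diagonal (fun i => (d i)⁻¹) * star U)
      = U * (diagonal d * ((star U * U) * (diagonal (fun i => (d i)⁻¹) * star U))) := by
        simp only [Matrix.mul_assoc]
    _ = 1 := by
        rw [hU1, one_mul, ← Matrix.mul_assoc (diagonal d), diagonal_mul_diagonal]
        have : (fun i => d i * (d i)⁻¹) = fun _ => (1:ℝ) := by
          ext i; exact mul_inv_cancel₀ (hd i)
        rw [this, diagonal_one, one_mul, hU2]

lemma herm_quad_decomp {A : Matrix ι ι ℝ} (hA : A.IsHermitian) (x : ι → ℝ) :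
    ∃ y : ι → ℝ,
      x ⬝ᵥ x = ∑ i, y i ^ 2 ∧
      x ⬝ᵥ A *ᵥ x = ∑ i, hA.eigenvalues i * y i ^ 2 ∧
      (A *ᵥ x) ⬝ᵥ (A *ᵥ x) = ∑ i, (hA.eigenvalues i) ^ 2 * y i ^ 2 ∧
      ((∀ i, hA.eigenvalues i ≠ 0) →
        x ⬝ᵥ A⁻¹ *ᵥ x = ∑ i, (hA.eigenvalues i)⁻¹ * y i ^ 2) := by
  set U : Matrix ι ι ℝ := (hA.eigenvectorUnitary : Matrix ι ι ℝ) with hUdef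
  have hU1 : star U * U = 1 := Unitary.coe_star_mul_self hA.eigenvectorUnitary
  have hU2 : U * star U = 1 := Unitary.coe_mul_star_self hA.eigenvectorUnitary
  have hspec : A = U * diagonal hA.eigenvalues * star U := by
    have := hA.spectral_theorem
    rwa [RCLike.ofReal_real_eq_id, Function.id_comp] at this
  set y : ι → ℝ := star U *ᵥ x with hy
  have hyy : ∀ z : ι → ℝ, (U *ᵥ z) ⬝ᵥ (U *ᵥ z) = z ⬝ᵥ z := by
    intro z
    rw [dotProduct_mulVec, vecMul_eq_starMulVec, mulVec_mulVec, hU1, one_mulVec]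
  have hxy : x ⬝ᵥ x = y ⬝ᵥ y := by
    conv_lhs => rw [← one_mulVec x, ← hU2, ← mulVec_mulVec, hyy (star U *ᵥ x)]
  have hdot : ∀ d : ι → ℝ, y ⬝ᵥ (diagonal d *ᵥ y) = ∑ i, d i * y i ^ 2 := by
    intro d
    simp only [dotProduct, mulVec_diagonal]
    exact Finset.sum_congr rfl fun i _ => by ring
  have hquadgen : ∀ d : ι → ℝ, x ⬝ᵥ ((U * diagonal d * star U) *ᵥ x) = ∑ i, d i * y i ^ 2 := by
    intro d
    rw [← mulVec_mulVec, ← mulVec_mulVec, dotProduct_mulVec, vecMul_eq_starMulVec, ← hy, ← hdot d]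
  refine ⟨y, ?_, ?_, ?_, ?_⟩
  · rw [hxy]
    simp only [dotProduct, pow_two]
  · conv_lhs => rw [hspec]
    exact hquadgen _
  · conv_lhs => rw [hspec]
    rw [← mulVec_mulVec, ← mulVec_mulVec, hyy, ← hy]
    simp only [dotProduct, mulVec_diagonal]
    exact Finset.sum_congr rfl fun i _ => by ring
  · intro hne
    conv_lhs => rw [hspec]
    rw [unitary_diag_inv U hU1 hU2 _ hne]
    exact hquadgen _

lemma quad_lower {A : Matrix ι ι ℝ} (hA : A.IsHermitian) {c : ℝ}
    (hc : ∀ i, c ≤ hA.eigenvalues i) (x : ι → ℝ) :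
    c * (x ⬝ᵥ x) ≤ x ⬝ᵥ A *ᵥ x := by
  obtain ⟨y, h1, h2, -, -⟩ := herm_quad_decomp hA x
  rw [h1, h2, Finset.mul_sum]
  exact Finset.sum_le_sum fun i _ => mul_le_mul_of_nonneg_right (hc i) (sq_nonneg _)

lemma quad_upper {A : Matrix ι ι ℝ} (hA : A.IsHermitian) {c : ℝ}
    (hc : ∀ i, hA.eigenvalues i ≤ c) (x : ι → ℝ) :
    x ⬝ᵥ A *ᵥ x ≤ c * (x ⬝ᵥ x) := by
  obtain ⟨y, h1, h2, -, -⟩ := herm_quad_decomp hA x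
  rw [h1, h2, Finset.mul_sum]
  exact Finset.sum_le_sum fun i _ => mul_le_mul_of_nonneg_right (hc i) (sq_nonneg _)

lemma quad_sq_lower {A : Matrix ι ι ℝ} (hA : A.IsHermitian) {c : ℝ} (hc0 : 0 ≤ c)
    (hc : ∀ i, c ≤ hA.eigenvalues i) (x : ι → ℝ) :
    c * (x ⬝ᵥ A *ᵥ x) ≤ (A *ᵥ x) ⬝ᵥ (A *ᵥ x) := by
  obtain ⟨y, -, h2, h3, -⟩ := herm_quad_decomp hA x
  rw [h2, h3, Finset.mul_sum]
  refine Finset.sum_le_sum fun i _ => ?_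
  have h := hc i
  nlinarith [sq_nonneg (y i), mul_nonneg (mul_nonneg (le_trans hc0 h) (sq_nonneg (y i))) (sub_nonneg.mpr h)]

lemma quad_inv_lower {A : Matrix ι ι ℝ} (hA : A.IsHermitian) {c : ℝ}
    (hpos : ∀ i, 0 < hA.eigenvalues i) (hc : ∀ i, hA.eigenvalues i ≤ c) (x : ι → ℝ) :
    x ⬝ᵥ x ≤ c * (x ⬝ᵥ A⁻¹ *ᵥ x) := by
  obtain ⟨y, h1, -, -, h4⟩ := herm_quad_decomp hA x
  rw [h1, h4 (fun i => (hpos i).ne'), Finset.mul_sum]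
  refine Finset.sum_le_sum fun i _ => ?_
  have h1c : (1:ℝ) ≤ c * (hA.eigenvalues i)⁻¹ := by
    rw [← div_eq_mul_inv]
    exact (one_le_div (hpos i)).mpr (hc i)
  calc y i ^ 2 = 1 * y i ^ 2 := (one_mul _).symm
    _ ≤ (c * (hA.eigenvalues i)⁻¹) * y i ^ 2 :=
        mul_le_mul_of_nonneg_right h1c (sq_nonneg _)
    _ = c * ((hA.eigenvalues i)⁻¹ * y i ^ 2) := by ring

lemma single_quad (A : Matrix ι ι ℝ) (i : ι) :
    (Pi.single i 1) ⬝ᵥ A *ᵥ (Pi.single i 1) = A i i := by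
  simp [dotProduct, mulVec, Pi.single_apply, ite_mul, mul_ite, Finset.sum_ite_eq]

lemma single_dot (i : ι) : (Pi.single i (1:ℝ)) ⬝ᵥ Pi.single i 1 = 1 := by
  simp [dotProduct, Pi.single_apply, ite_mul, Finset.sum_ite_eq]
end helpers

section mhelp
variable {n : ℕ} {I : Finset (Fin n)}

lemma rowSel_mul_apply_s8 {l : Type*} [Fintype l] (M : Matrix (Fin n) l ℝ) (i : I) (c : l) :
    (rowSel I * M) i c = M i c := by
  simp [rowSel, Matrix.mul_apply, ite_mul, Finset.sum_ite_eq]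

lemma mul_rowSel_transpose_apply {l : Type*} [Fintype l] (M : Matrix l (Fin n) ℝ) (c : l) (i : I) :
    (M * (rowSel I)ᵀ) c i = M c i := by
  simp [rowSel, Matrix.mul_apply, mul_ite, Finset.sum_ite_eq']

lemma block_apply (K : Matrix (Fin n) (Fin n) ℝ) (i i' : I) :
    (rowSel I * K * (rowSel I)ᵀ) i i' = K i i' := by
  rw [mul_rowSel_transpose_apply, rowSel_mul_apply_s8]

lemma transpose_rowSel_mulVec (x : I → ℝ) (i0 : I) :
    ((rowSel I)ᵀ *ᵥ x) (i0 : Fin n) = x i0 := by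
  simp only [mulVec, dotProduct, transpose_apply, rowSel, Matrix.of_apply, ite_mul, one_mul,
    zero_mul]
  simp only [Subtype.coe_inj]
  simp [Finset.sum_ite_eq']

lemma quad_rowSel (K : Matrix (Fin n) (Fin n) ℝ) (x : I → ℝ) :
    x ⬝ᵥ ((rowSel I * K * (rowSel I)ᵀ) *ᵥ x) = ((rowSel I)ᵀ *ᵥ x) ⬝ᵥ (K *ᵥ ((rowSel I)ᵀ *ᵥ x)) := by
  rw [← mulVec_mulVec, ← mulVec_mulVec, dotProduct_mulVec, ← mulVec_transpose, dotProduct_mulVec,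
    ← mulVec_transpose]

lemma posdef_block (K : Matrix (Fin n) (Fin n) ℝ) (hK : K.PosDef)
    (hsub : (rowSel I * K * (rowSel I)ᵀ).IsHermitian) :
    (rowSel I * K * (rowSel I)ᵀ).PosDef := by
  refine .of_dotProduct_mulVec_pos hsub fun x hx => ?_
  have hz : (rowSel I)ᵀ *ᵥ x ≠ 0 := by
    intro h
    apply hx
    ext i0
    have := congrFun h (i0 : Fin n)
    rwa [transpose_rowSel_mulVec] at this
  have := hK.dotProduct_mulVec_pos hz
  simpa [quad_rowSel, star_trivial] using this

lemma trace_form {a b : Type*} [Fintype a] [Fintype b] (A : Matrix a a ℝ) (M N : Matrix a b ℝ) :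
    (Mᵀ * A * N).trace = ∑ c, (fun i => M i c) ⬝ᵥ (A *ᵥ fun i => N i c) := by
  rw [Matrix.trace]
  apply Finset.sum_congr rfl
  intro c _
  simp only [diag_apply, Matrix.mul_apply, transpose_apply, dotProduct, mulVec,
    Finset.sum_mul, Finset.mul_sum]
  rw [Finset.sum_comm]
  exact Finset.sum_congr rfl fun i _ => Finset.sum_congr rfl fun j _ => by ring
end mhelp

lemma herm_transpose {ι : Type*} [Fintype ι] {M : Matrix ι ι ℝ} (h : M.IsHermitian) :
    Mᵀ = M := by
  ext i j
  have := congrFun (congrFun h i) j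
  simpa [conjTranspose_apply] using this

set_option maxHeartbeats 1000000 in
/-- With Gauss–Southwell block selection, after `t` epochs (each epoch being `m`
updates, `m = |P|`), alternating projection satisfies
`‖W⁽ᵗ⁾ − W*‖_K² ≤ exp(−t/κ′) ‖W⁽⁰⁾ − W*‖_K²` with `κ′ = λ'_max/λ_min`. -/
theorem altproj_gs_epoch_convergence {n l : ℕ}
    (K : Matrix (Fin n) (Fin n) ℝ) (hK : K.PosDef)
    (B : Matrix (Fin n) (Fin l) ℝ)
    (P : Finset (Finset (Fin n))) (m : ℕ) (hm : P.card = m)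
    (hcover : ∀ i : Fin n, ∃ I ∈ P, i ∈ I)
    (hdisj : ∀ I ∈ P, ∀ J ∈ P, I ≠ J → Disjoint I J)
    (hblockne : ∀ I ∈ P, I.Nonempty)
    (lammin : ℝ) (hmin : IsLeast (Set.range hK.1.eigenvalues) lammin)
    (hsub : ∀ I : Finset (Fin n), (rowSel I * K * (rowSel I)ᵀ).IsHermitian)
    (lam'max : ℝ)
    (hlam : IsGreatest {x : ℝ | ∃ I ∈ P, ∃ i : I, x = (hsub I).eigenvalues i} lam'max)
    (Wstar : Matrix (Fin n) (Fin l) ℝ) (hWstar : Wstar = K⁻¹ * B)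
    (W : ℕ → Matrix (Fin n) (Fin l) ℝ) (Idx : ℕ → Finset (Fin n))
    (hIdx : ∀ j, Idx j ∈ P)
    (hGS : ∀ j, ∀ J ∈ P, (∑ i ∈ J, ∑ c : Fin l, ((B - K * W j) i c) ^ 2)
      ≤ ∑ i ∈ Idx j, ∑ c : Fin l, ((B - K * W j) i c) ^ 2)
    (hWupd : ∀ j, W (j + 1) = W j +
      (rowSel (Idx j))ᵀ * (rowSel (Idx j) * K * (rowSel (Idx j))ᵀ)⁻¹ *
        (rowSel (Idx j) * (B - K * W j))) :
    ∀ t : ℕ,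
      ((W (t * m) - Wstar)ᵀ * K * (W (t * m) - Wstar)).trace
        ≤ Real.exp (-(t : ℝ) / (lam'max / lammin)) *
          ((W 0 - Wstar)ᵀ * K * (W 0 - Wstar)).trace := by
  have hKT : Kᵀ = K := herm_transpose hK.1
  have hKdet : IsUnit K.det := (Matrix.isUnit_iff_isUnit_det K).mp hK.isUnit
  have hKW : K * Wstar = B := by
    rw [hWstar, ← Matrix.mul_assoc, mul_nonsing_inv _ hKdet, Matrix.one_mul]
  have hResid : ∀ j, B - K * W j = -(K * (W j - Wstar)) := by
    intro j
    rw [Matrix.mul_sub, hKW, neg_sub]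
  -- positivity facts
  obtain ⟨i0, hi0⟩ := hmin.1
  have hlammin_pos : 0 < lammin := hi0 ▸ hK.eigenvalues_pos i0
  obtain ⟨I1, hI1, i1x, hval⟩ := hlam.1
  have hlmax_pos : 0 < lam'max := by
    rw [hval]; exact (posdef_block K hK (hsub I1)).eigenvalues_pos i1x
  have hPne : P.Nonempty := by
    obtain ⟨J, hJ, -⟩ := hcover i0; exact ⟨J, hJ⟩
  have hm1 : 1 ≤ m := by rw [← hm]; exact Finset.card_pos.mpr hPne
  have hmR1 : (1:ℝ) ≤ (m:ℝ) := by exact_mod_cast hm1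
  have hmR : (0:ℝ) < (m:ℝ) := lt_of_lt_of_le one_pos hmR1
  have hKeig : ∀ i, lammin ≤ hK.1.eigenvalues i := fun i => hmin.2 ⟨i, rfl⟩
  have hblockeig : ∀ I, I ∈ P → ∀ i : I, (hsub I).eigenvalues i ≤ lam'max :=
    fun I hI i => hlam.2 ⟨I, hI, i, rfl⟩
  have hblockpos : ∀ (I : Finset (Fin n)) (i : I), 0 < (hsub I).eigenvalues i :=
    fun I i => (posdef_block K hK (hsub I)).eigenvalues_pos i
  -- lammin ≤ lam'max
  have hminlemax : lammin ≤ lam'max := by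
    obtain ⟨I2, hI2⟩ := hPne
    obtain ⟨i2, hi2⟩ := hblockne I2 hI2
    have h1 : lammin * 1 ≤ K i2 i2 := by
      have h := quad_lower hK.1 hKeig (Pi.single i2 1)
      rwa [single_dot, single_quad] at h
    have h2 : K i2 i2 ≤ lam'max * 1 := by
      have h := quad_upper (hsub I2) (hblockeig I2 hI2) (Pi.single (⟨i2, hi2⟩ : I2) 1)
      rwa [single_dot, single_quad, block_apply] at h
    linarith
  set xx : ℝ := lammin / (m * lam'max) with hxdef
  have hmlpos : (0:ℝ) < (m:ℝ) * lam'max := by positivity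
  have hx_pos : 0 < xx := div_pos hlammin_pos hmlpos
  have hx_le1 : xx ≤ 1 := by
    rw [hxdef, div_le_one hmlpos]
    calc lammin ≤ lam'max := hminlemax
      _ = 1 * lam'max := (one_mul _).symm
      _ ≤ (m:ℝ) * lam'max := mul_le_mul_of_nonneg_right hmR1 hlmax_pos.le
  set ρ : ℝ := 1 - xx with hρdef
  have hρ0 : 0 ≤ ρ := by rw [hρdef]; linarith
  have hρexp : ρ ≤ Real.exp (-xx) := by
    have h := Real.add_one_le_exp (-xx)
    rw [hρdef]; linarith
  -- nonnegativity of the K-norm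
  have hfnn : ∀ M : Matrix (Fin n) (Fin l) ℝ, 0 ≤ (Mᵀ * K * M).trace := by
    intro M
    rw [trace_form]
    refine Finset.sum_nonneg fun c _ => ?_
    have h := hK.posSemidef.dotProduct_mulVec_nonneg (fun i => M i c)
    simpa using h
  -- the per-step contraction
  have hstep : ∀ j, ((W (j+1) - Wstar)ᵀ * K * (W (j+1) - Wstar)).trace
      ≤ ρ * ((W j - Wstar)ᵀ * K * (W j - Wstar)).trace := by
    intro j
    set I : Finset (Fin n) := Idx j with hIdef
    set S : Matrix I (Fin n) ℝ := rowSel I with hSdef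
    set A : Matrix I I ℝ := S * K * Sᵀ with hAdef
    set R : Matrix (Fin n) (Fin l) ℝ := B - K * W j with hRdef
    have hApd : A.PosDef := posdef_block K hK (hsub I)
    have hAdet : IsUnit A.det := (Matrix.isUnit_iff_isUnit_det A).mp hApd.isUnit
    have hAT : Aᵀ = A := herm_transpose (hsub I)
    have hAinvT : (A⁻¹)ᵀ = A⁻¹ := by rw [transpose_nonsing_inv, hAT]
    set Δ : Matrix (Fin n) (Fin l) ℝ := Sᵀ * A⁻¹ * (S * R) with hΔdef
    set E : Matrix (Fin n) (Fin l) ℝ := W j - Wstar with hEdef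
    have hE' : W (j+1) - Wstar = E + Δ := by
      rw [hWupd j, hEdef]; exact add_sub_right_comm _ _ _
    have hKE : K * E = -R := by
      have h := hResid j
      rw [← hRdef, ← hEdef] at h
      rw [h, neg_neg]
    set G : Matrix (Fin l) (Fin l) ℝ := (S*R)ᵀ * A⁻¹ * (S*R) with hGdef
    have hEK : Eᵀ * K = -Rᵀ := by
      rw [← hKT, ← transpose_mul, hKE, transpose_neg]
    have hT2 : Eᵀ * K * Δ = -G := by
      rw [hEK, hΔdef, hGdef, transpose_mul]
      simp only [Matrix.neg_mul, Matrix.mul_assoc]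
    have hΔT : Δᵀ = Rᵀ * Sᵀ * (A⁻¹ * S) := by
      rw [hΔdef]
      simp only [transpose_mul, transpose_transpose, hAinvT, Matrix.mul_assoc]
    have hcollapse : ∀ Z : Matrix I (Fin l) ℝ, S * (K * (Sᵀ * Z)) = A * Z := by
      intro Z; rw [hAdef]; simp only [Matrix.mul_assoc]
    have hT3 : Δᵀ * K * Δ = G := by
      rw [hΔT, hΔdef, hGdef]
      calc Rᵀ * Sᵀ * (A⁻¹ * S) * K * (Sᵀ * A⁻¹ * (S * R))
          = Rᵀ * Sᵀ * (A⁻¹ * (S * (K * (Sᵀ * (A⁻¹ * (S * R)))))) := by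
            simp only [Matrix.mul_assoc]
        _ = Rᵀ * Sᵀ * (A⁻¹ * (A * (A⁻¹ * (S * R)))) := by rw [hcollapse]
        _ = Rᵀ * Sᵀ * (A⁻¹ * (S * R)) := by
            rw [show A⁻¹ * (A * (A⁻¹ * (S * R))) = (A⁻¹ * A) * (A⁻¹ * (S*R)) from by
              simp only [Matrix.mul_assoc], nonsing_inv_mul _ hAdet, Matrix.one_mul]
        _ = (S*R)ᵀ * A⁻¹ * (S*R) := by rw [transpose_mul]; simp only [Matrix.mul_assoc]
    have hT1 : (Δᵀ * K * E).trace = -G.trace := by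
      have htr : (Δᵀ * K * E)ᵀ = Eᵀ * K * Δ := by
        calc (Δᵀ * K * E)ᵀ = Eᵀ * (Kᵀ * Δ) := by
              simp only [transpose_mul, transpose_transpose, Matrix.mul_assoc]
          _ = Eᵀ * K * Δ := by rw [hKT, Matrix.mul_assoc]
      rw [← trace_transpose (Δᵀ * K * E), htr, hT2, trace_neg]
    have hkey : ((W (j+1) - Wstar)ᵀ * K * (W (j+1) - Wstar)).trace
        = (Eᵀ * K * E).trace - G.trace := by
      rw [hE']
      have expand : (E + Δ)ᵀ * K * (E + Δ)
          = (Eᵀ*K*E + Eᵀ*K*Δ) + (Δᵀ*K*E + Δᵀ*K*Δ) := by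
        simp only [transpose_add, Matrix.add_mul, Matrix.mul_add]
        abel
      rw [expand, trace_add, trace_add, trace_add, hT2, hT3, hT1, trace_neg]
      ring
    -- quantitative lower bound for G.trace
    have hSR : ∀ (c : Fin l) (i : I), (S * R) i c = R i c := fun c i => rowSel_mul_apply_s8 R i c
    have hGsum : G.trace = ∑ c, (fun i => (S*R) i c) ⬝ᵥ (A⁻¹ *ᵥ fun i => (S*R) i c) :=
      trace_form _ _ _
    have hblkle : (∑ i ∈ I, ∑ c, R i c ^ 2) ≤ lam'max * G.trace := by
      rw [hGsum, Finset.mul_sum]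
      have hsw : (∑ i ∈ I, ∑ c, R i c ^ 2) = ∑ c, ∑ i : I, R i c ^ 2 := by
        rw [Finset.sum_comm]
        exact Finset.sum_congr rfl fun c _ => (Finset.sum_coe_sort I fun i => R i c ^ 2).symm
      rw [hsw]
      refine Finset.sum_le_sum fun c _ => ?_
      have h := quad_inv_lower (hsub I) (hblockpos I) (hblockeig I (hIdx j))
        (fun i => (S*R) i c)
      have hdot : (fun i => (S*R) i c) ⬝ᵥ (fun i => (S*R) i c) = ∑ i : I, R i c ^ 2 := by
        simp only [dotProduct, hSR, pow_two]
      rwa [hdot] at h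
    have htotle : (∑ i : Fin n, ∑ c, R i c ^ 2) ≤ (m:ℝ) * ∑ i ∈ I, ∑ c, R i c ^ 2 := by
      have huniv : (Finset.univ : Finset (Fin n)) = P.biUnion id := by
        ext a
        simp only [Finset.mem_univ, Finset.mem_biUnion, id, true_iff]
        exact hcover a
      have hpd : (P : Set (Finset (Fin n))).PairwiseDisjoint id :=
        fun I' hI' J hJ hne => hdisj I' hI' J hJ hne
      rw [huniv, Finset.sum_biUnion hpd]
      calc ∑ J ∈ P, ∑ i ∈ J, ∑ c, R i c ^ 2
          ≤ ∑ _J ∈ P, ∑ i ∈ I, ∑ c, R i c ^ 2 :=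
            Finset.sum_le_sum fun J hJ => hGS j J hJ
        _ = (m:ℝ) * ∑ i ∈ I, ∑ c, R i c ^ 2 := by
            rw [Finset.sum_const, hm, nsmul_eq_mul]
    have hfle : lammin * (Eᵀ * K * E).trace ≤ ∑ i : Fin n, ∑ c, R i c ^ 2 := by
      rw [trace_form, Finset.mul_sum]
      have hsw : (∑ i : Fin n, ∑ c, R i c ^ 2) = ∑ c, ∑ i, R i c ^ 2 := Finset.sum_comm
      rw [hsw]
      refine Finset.sum_le_sum fun c _ => ?_
      have hcol : (fun i => R i c) = -(K *ᵥ fun i => E i c) := by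
        funext i
        have h2 : (K *ᵥ fun i' => E i' c) i = (K * E) i c := by
          simp [mulVec, dotProduct, Matrix.mul_apply]
        show R i c = -((K *ᵥ fun i' => E i' c) i)
        rw [h2, hKE]
        simp
      have h := quad_sq_lower hK.1 hlammin_pos.le hKeig (fun i => E i c)
      have hRc : (∑ i, R i c ^ 2) = (K *ᵥ fun i => E i c) ⬝ᵥ (K *ᵥ fun i => E i c) := by
        have : (∑ i, R i c ^ 2) = (fun i => R i c) ⬝ᵥ (fun i => R i c) := by
          simp only [dotProduct, pow_two]
        rw [this, hcol]
        simp [dotProduct]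
      rw [hRc]
      exact h
    -- combine
    have hGge : xx * (Eᵀ * K * E).trace ≤ G.trace := by
      rw [hxdef, div_mul_eq_mul_div, div_le_iff₀ hmlpos]
      have hchain : lammin * (Eᵀ * K * E).trace ≤ (m:ℝ) * (lam'max * G.trace) := by
        calc lammin * (Eᵀ * K * E).trace ≤ ∑ i : Fin n, ∑ c, R i c ^ 2 := hfle
          _ ≤ (m:ℝ) * ∑ i ∈ I, ∑ c, R i c ^ 2 := htotle
          _ ≤ (m:ℝ) * (lam'max * G.trace) := mul_le_mul_of_nonneg_left hblkle hmR.le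
      nlinarith [hchain]
    rw [hkey]
    have hρf : ρ * (Eᵀ * K * E).trace = (Eᵀ * K * E).trace - xx * (Eᵀ * K * E).trace := by
      rw [hρdef]; ring
    linarith [hGge, hρf]
  -- iterate
  have hiter : ∀ s, ((W s - Wstar)ᵀ * K * (W s - Wstar)).trace
      ≤ ρ ^ s * ((W 0 - Wstar)ᵀ * K * (W 0 - Wstar)).trace := by
    intro s
    induction s with
    | zero => simp
    | succ s ih =>
      calc ((W (s+1) - Wstar)ᵀ * K * (W (s+1) - Wstar)).trace
          ≤ ρ * ((W s - Wstar)ᵀ * K * (W s - Wstar)).trace := hstep s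
        _ ≤ ρ * (ρ ^ s * ((W 0 - Wstar)ᵀ * K * (W 0 - Wstar)).trace) :=
            mul_le_mul_of_nonneg_left ih hρ0
        _ = ρ ^ (s+1) * ((W 0 - Wstar)ᵀ * K * (W 0 - Wstar)).trace := by ring
  intro t
  have h1 := hiter (t * m)
  have h2 : ρ ^ (t * m) ≤ Real.exp (-(t:ℝ) / (lam'max / lammin)) := by
    have hp := pow_le_pow_left₀ hρ0 hρexp (t * m)
    have he : Real.exp (-xx) ^ (t * m) = Real.exp (-(t:ℝ) / (lam'max / lammin)) := by
      rw [← Real.exp_nat_mul]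
      congr 1
      rw [hxdef]
      push_cast
      field_simp
    rw [he] at hp
    exact hp
  calc ((W (t*m) - Wstar)ᵀ * K * (W (t*m) - Wstar)).trace
      ≤ ρ ^ (t*m) * ((W 0 - Wstar)ᵀ * K * (W 0 - Wstar)).trace := h1
    _ ≤ Real.exp (-(t:ℝ) / (lam'max / lammin)) * ((W 0 - Wstar)ᵀ * K * (W 0 - Wstar)).trace :=
        mul_le_mul_of_nonneg_right h2 (hfnn _)
end
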